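/- arXiv:1210.5532 — 3 statements merged into one kernel-verified Lean document; each statement's English description precedes it below -/
import Mathlib

section
/- Let 𝟙_H be the indicator function of the regular hexagon H with center 0 and circumradius 1, and let {𝟙_{H_i}} be the indicator functions of the hexagons of the half-scaled hexagonal tessellation in which the origin is a hexagon center. Then 𝟙_H is not equal (as a function, outside a measure-zero set) to any finite linear combination of the 𝟙_{H_i}. -/
open Real MeasureTheory


noncomputable def HexV : Set (Fin 2 → ℝ) :=
  {p | ∃ k : Fin 6, p = ![Real.cos ((k : ℕ) * π / 3), Real.sin ((k : ℕ) * π / 3)]}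

noncomputable def Hex : Set (Fin 2 → ℝ) := convexHull ℝ HexV

lemma cos3 : Real.cos (3 * π / 3) = -1 := by
  rw [show (3 * π / 3 : ℝ) = π by ring, Real.cos_pi]
lemma sin3 : Real.sin (3 * π / 3) = 0 := by
  rw [show (3 * π / 3 : ℝ) = π by ring, Real.sin_pi]
lemma cos4 : Real.cos (4 * π / 3) = -(1/2) := by
  rw [show (4 * π / 3 : ℝ) = π/3 + π by ring, Real.cos_add_pi, Real.cos_pi_div_three]
lemma sin4 : Real.sin (4 * π / 3) = -(Real.sqrt 3 / 2) := by
  rw [show (4 * π / 3 : ℝ) = π/3 + π by ring, Real.sin_add_pi, Real.sin_pi_div_three]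

lemma m0 : ![(1:ℝ), 0] ∈ Hex :=
  subset_convexHull _ _ ⟨0, by norm_num⟩
lemma m1 : ![(1/2 : ℝ), Real.sqrt 3 / 2] ∈ Hex :=
  subset_convexHull _ _ ⟨1, by norm_num [Real.cos_pi_div_three, Real.sin_pi_div_three]⟩
lemma m3 : ![(-1 : ℝ), 0] ∈ Hex :=
  subset_convexHull _ _ ⟨3, by
    rw [show (((3:Fin 6):ℕ):ℝ) = 3 from by norm_cast, cos3, sin3]⟩
lemma m4 : ![(-(1/2) : ℝ), -(Real.sqrt 3 / 2)] ∈ Hex :=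
  subset_convexHull _ _ ⟨4, by
    rw [show (((4:Fin 6):ℕ):ℝ) = 4 from by norm_cast, cos4, sin4]⟩

lemma hexComb (a b c d e : ℝ) (z : Fin 2 → ℝ) (hz : z ∈ Hex)
    (ha : 0 ≤ a) (hb : 0 ≤ b) (hc : 0 ≤ c) (hd : 0 ≤ d) (he : 0 ≤ e)
    (hsum : a + b + c + d + e = 1) :
    ![a + b/2 - c - d/2 + e * z 0, (b - d) * (Real.sqrt 3 / 2) + e * z 1] ∈ Hex := by
  have hcx : Convex ℝ Hex := convex_convexHull ℝ _
  have key := hcx.sum_mem (t := (Finset.univ : Finset (Fin 5)))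
    (w := ![a, b, c, d, e])
    (z := ![![(1:ℝ), 0], ![(1/2 : ℝ), Real.sqrt 3 / 2], ![(-1 : ℝ), 0],
      ![(-(1/2) : ℝ), -(Real.sqrt 3 / 2)], z])
    (fun i _ => by fin_cases i <;> simpa)
    (by simp [Fin.sum_univ_five]; linarith)
    (fun i _ => by fin_cases i <;> [exact m0; exact m1; exact m3; exact m4; exact hz])
  convert key using 1
  rw [Fin.sum_univ_five]
  funext i
  fin_cases i <;>
    simp [Matrix.cons_val_zero, Matrix.cons_val_one, Matrix.head_cons] <;> ring

lemma sqrt3_sq : Real.sqrt 3 * Real.sqrt 3 = 3 := Real.mul_self_sqrt (by norm_num)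
lemma sqrt3_lb : (1.7:ℝ) ≤ Real.sqrt 3 := by
  rw [show (1.7:ℝ) = Real.sqrt (1.7^2) by rw [Real.sqrt_sq]; norm_num]
  exact Real.sqrt_le_sqrt (by norm_num)
lemma sqrt3_ub : Real.sqrt 3 ≤ 1.8 := by
  rw [show (1.8:ℝ) = Real.sqrt (1.8^2) by rw [Real.sqrt_sq]; norm_num]
  exact Real.sqrt_le_sqrt (by norm_num)

lemma hexBox (x : Fin 2 → ℝ) (h0 : |x 0| ≤ 1/4) (h1 : |x 1| ≤ 1/4) : x ∈ Hex := by
  have s3q := sqrt3_sq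
  have lb := sqrt3_lb
  have ub := sqrt3_ub
  rw [abs_le] at h0 h1
  set α := x 0 - x 1 * Real.sqrt 3 / 3 with hα
  set β := 2 * x 1 * Real.sqrt 3 / 3 with hβ
  have hα1 : -(2/5) ≤ α := by rw [hα]; nlinarith [h0.1, h1.2]
  have hα2 : α ≤ 2/5 := by rw [hα]; nlinarith [h0.2, h1.1]
  have hβ1 : -(1/3) ≤ β := by rw [hβ]; nlinarith [h1.1]
  have hβ2 : β ≤ 1/3 := by rw [hβ]; nlinarith [h1.2]
  rcases le_total 0 α with hA | hA <;> rcases le_total 0 β with hB | hB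
  · refine Set.mem_of_eq_of_mem ?_
      (hexComb (α + (1-α-β)/2) β ((1-α-β)/2) 0 0 ![1,0] m0
        (by linarith) hB (by linarith) le_rfl le_rfl (by ring))
    funext i; fin_cases i <;> simp <;>
      [skip; linear_combination (-(x 1) / 3) * s3q]
    rw [hβ]; ring
  · refine Set.mem_of_eq_of_mem ?_
      (hexComb (α + (1-α+β)/2) 0 ((1-α+β)/2) (-β) 0 ![1,0] m0
        (by linarith) le_rfl (by linarith) (by linarith) le_rfl (by ring))
    funext i; fin_cases i <;> simp <;>
      [skip; linear_combination (-(x 1) / 3) * s3q]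
    rw [hβ]; ring
  · refine Set.mem_of_eq_of_mem ?_
      (hexComb ((1+α-β)/2) β (-α + (1+α-β)/2) 0 0 ![1,0] m0
        (by linarith) hB (by linarith) le_rfl le_rfl (by ring))
    funext i; fin_cases i <;> simp <;>
      [skip; linear_combination (-(x 1) / 3) * s3q]
    rw [hβ]; ring
  · refine Set.mem_of_eq_of_mem ?_
      (hexComb ((1+α+β)/2) 0 (-α + (1+α+β)/2) (-β) 0 ![1,0] m0
        (by linarith) le_rfl (by linarith) (by linarith) le_rfl (by ring))
    funext i; fin_cases i <;> simp <;>
      [skip; linear_combination (-(x 1) / 3) * s3q]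
    rw [hβ]; ring

lemma hexBound : ∀ x ∈ Hex,
    3 * x 0 + Real.sqrt 3 * x 1 ≤ 3 ∧ |x 0| ≤ 1 ∧ |x 1| ≤ Real.sqrt 3 / 2 := by
  have hconv : Convex ℝ {x : Fin 2 → ℝ |
      3 * x 0 + Real.sqrt 3 * x 1 ≤ 3 ∧ |x 0| ≤ 1 ∧ |x 1| ≤ Real.sqrt 3 / 2} := by
    intro x hx y hy a b ha hb hab
    simp only [Set.mem_setOf_eq, Pi.add_apply, Pi.smul_apply, smul_eq_mul, abs_le] at *
    refine ⟨by nlinarith [hx.1, hy.1],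
      ⟨by nlinarith [hx.2.1.1, hy.2.1.1], by nlinarith [hx.2.1.2, hy.2.1.2]⟩,
      by nlinarith [hx.2.2.1, hy.2.2.1], by nlinarith [hx.2.2.2, hy.2.2.2]⟩
  refine convexHull_min ?_ hconv
  rintro p ⟨k, rfl⟩
  have h2 : Real.cos (2 * π / 3) = -(1/2) := by
    rw [show (2 * π / 3 : ℝ) = π - π/3 by ring, Real.cos_pi_sub, Real.cos_pi_div_three]
  have h2' : Real.sin (2 * π / 3) = Real.sqrt 3 / 2 := by
    rw [show (2 * π / 3 : ℝ) = π - π/3 by ring, Real.sin_pi_sub, Real.sin_pi_div_three]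
  have h5 : Real.cos (5 * π / 3) = 1/2 := by
    rw [show (5 * π / 3 : ℝ) = (π - π/3) + π by ring, Real.cos_add_pi, Real.cos_pi_sub,
      Real.cos_pi_div_three]; ring
  have h5' : Real.sin (5 * π / 3) = -(Real.sqrt 3 / 2) := by
    rw [show (5 * π / 3 : ℝ) = (π - π/3) + π by ring, Real.sin_add_pi, Real.sin_pi_sub,
      Real.sin_pi_div_three]
  have s3q := sqrt3_sq
  have lb := sqrt3_lb
  have ub := sqrt3_ub
  fin_cases k <;>
    norm_num [h2, h2', h5, h5', cos3, sin3, cos4, sin4, Membership.mem, Set.Mem,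
      Matrix.cons_val_zero, Matrix.cons_val_one, Matrix.head_cons,
      Real.cos_pi_div_three, Real.sin_pi_div_three, abs_le] <;>
    first | positivity | (constructor <;> nlinarith) | nlinarith

set_option maxHeartbeats 1000000 in
/-- Non-refinability of the indicator of the hexagonal Voronoi cell: the indicator
function of the regular hexagon `H` (circumradius 1, Voronoi cell at `0` of the
lattice generated by `g₁ = (3/2, √3/2)` and `g₂ = (3/2, −√3/2)`) is not
Lebesgue-a.e. equal to any finite linear combination of indicator functions of the
cells of the half-scaled hexagonal tessellation. -/
theorem stmt9
    (g₁ g₂ : Fin 2 → ℝ)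
    (hg₁ : g₁ = ![3/2, Real.sqrt 3 / 2]) (hg₂ : g₂ = ![3/2, -(Real.sqrt 3 / 2)])
    (H : Set (Fin 2 → ℝ))
    (hH : H = convexHull ℝ
      {p | ∃ k : Fin 6, p = ![Real.cos ((k : ℕ) * π / 3), Real.sin ((k : ℕ) * π / 3)]})
    (cell : ℤ × ℤ → Set (Fin 2 → ℝ))
    (hcell : cell = fun p =>
      (fun x => (1/2 : ℝ) • x + ((p.1 : ℝ) / 2) • g₁ + ((p.2 : ℝ) / 2) • g₂) '' H) :
    ∀ (s : Finset (ℤ × ℤ)) (a : ℤ × ℤ → ℝ),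
      ¬ (Set.indicator H (fun _ => (1 : ℝ)) =ᵐ[volume]
          fun x => ∑ p ∈ s, a p * Set.indicator (cell p) (fun _ => (1 : ℝ)) x) := by
  intro s a h
  have hHex : H = Hex := by rw [hH]; rfl
  have s3q := sqrt3_sq
  have lb := sqrt3_lb
  have ub := sqrt3_ub
  have s3nn : (0:ℝ) ≤ Real.sqrt 3 := Real.sqrt_nonneg 3
  set x₁ : Fin 2 → ℝ := ![27/40, 9 * Real.sqrt 3 / 40] with hx₁
  set x₂ : Fin 2 → ℝ := ![4/5, Real.sqrt 3 / 4] with hx₂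
  -- coordinatewise distance control in balls
  have hdist : ∀ (y w : Fin 2 → ℝ), y ∈ Metric.ball w (1/100) →
      |y 0 - w 0| ≤ 1/100 ∧ |y 1 - w 1| ≤ 1/100 := by
    intro y w hy
    rw [Metric.mem_ball] at hy
    have h0 := dist_le_pi_dist y w 0
    have h1 := dist_le_pi_dist y w 1
    rw [Real.dist_eq] at h0 h1
    exact ⟨h0.trans hy.le, h1.trans hy.le⟩
  -- ball 1 is inside H
  have hB1H : ∀ y ∈ Metric.ball x₁ (1/100), y ∈ H := by
    intro y hy
    obtain ⟨d0, d1⟩ := hdist y x₁ hy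
    rw [hx₁] at d0 d1
    simp only [Matrix.cons_val_zero, Matrix.cons_val_one, Matrix.head_cons] at d0 d1
    rw [abs_le] at d0 d1
    have hz : (fun i => 10 * (y i - x₁ i)) ∈ Hex := by
      apply hexBox
      · rw [hx₁]; simp only [Matrix.cons_val_zero]
        rw [abs_le]; constructor <;> linarith [d0.1, d0.2]
      · rw [hx₁]; simp only [Matrix.cons_val_one, Matrix.head_cons, Matrix.cons_val_zero]
        rw [abs_le]; constructor <;> linarith [d1.1, d1.2]
    rw [hHex]
    refine Set.mem_of_eq_of_mem ?_
      (hexComb (9/20) (9/20) 0 0 (1/10) _ hz (by norm_num) (by norm_num) le_rfl le_rfl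
        (by norm_num) (by norm_num))
    funext i
    fin_cases i <;>
      simp only [hx₁, Matrix.cons_val_zero, Matrix.cons_val_one, Matrix.head_cons] <;>
      ring_nf <;>
      simp [Matrix.cons_val_zero, Matrix.cons_val_one, Matrix.head_cons]
  -- ball 2 is outside H
  have hB2H : ∀ y ∈ Metric.ball x₂ (1/100), y ∉ H := by
    intro y hy hmem
    rw [hHex] at hmem
    obtain ⟨hhalf, -, -⟩ := hexBound y hmem
    obtain ⟨d0, d1⟩ := hdist y x₂ hy
    rw [hx₂] at d0 d1
    simp only [Matrix.cons_val_zero, Matrix.cons_val_one, Matrix.head_cons] at d0 d1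
    rw [abs_le] at d0 d1
    have hp : Real.sqrt 3 * (Real.sqrt 3 / 4 - 1/100) ≤ Real.sqrt 3 * y 1 :=
      mul_le_mul_of_nonneg_left (by linarith [d1.1]) s3nn
    nlinarith [hp, s3q, lb, d0.1, hhalf]
  -- both balls are inside cell (1,0)
  have hcell10 : ∀ y, (y ∈ Metric.ball x₁ (1/100) ∨ y ∈ Metric.ball x₂ (1/100)) →
      y ∈ cell (1, 0) := by
    intro y hy
    have hz : (fun i => 2 * y i - ![(3/2 : ℝ), Real.sqrt 3 / 2] i) ∈ Hex := by
      rcases hy with hy | hy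
      · obtain ⟨d0, d1⟩ := hdist y x₁ hy
        rw [hx₁] at d0 d1
        simp only [Matrix.cons_val_zero, Matrix.cons_val_one, Matrix.head_cons] at d0 d1
        rw [abs_le] at d0 d1
        apply hexBox <;>
          simp only [Matrix.cons_val_zero, Matrix.cons_val_one, Matrix.head_cons] <;>
          rw [abs_le] <;> constructor <;> linarith [d0.1, d0.2, d1.1, d1.2, lb, ub]
      · obtain ⟨d0, d1⟩ := hdist y x₂ hy
        rw [hx₂] at d0 d1
        simp only [Matrix.cons_val_zero, Matrix.cons_val_one, Matrix.head_cons] at d0 d1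
        rw [abs_le] at d0 d1
        apply hexBox <;>
          simp only [Matrix.cons_val_zero, Matrix.cons_val_one, Matrix.head_cons] <;>
          rw [abs_le] <;> constructor <;> linarith [d0.1, d0.2, d1.1, d1.2, lb, ub]
    rw [hcell, hHex]
    refine ⟨fun i => 2 * y i - ![(3/2 : ℝ), Real.sqrt 3 / 2] i, hz, ?_⟩
    funext i
    fin_cases i <;>
      simp only [hg₁, hg₂, Pi.add_apply, Pi.smul_apply, smul_eq_mul,
        Matrix.cons_val_zero, Matrix.cons_val_one, Matrix.head_cons] <;>
      push_cast <;> ring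
  -- both balls avoid all other cells
  have hnotcell : ∀ y, |y 0 - 3/4| ≤ 9/100 → |y 1 - Real.sqrt 3/4| ≤ 6/100 →
      ∀ q : ℤ × ℤ, q ≠ (1, 0) → y ∉ cell q := by
    intro y hy0 hy1 q hq hmem
    rw [hcell] at hmem
    obtain ⟨x, hx, hxy⟩ := hmem
    rw [hHex] at hx
    obtain ⟨-, hx0, hx1⟩ := hexBound x hx
    rw [abs_le] at hy0 hy1 hx0 hx1
    have e0 := congrFun hxy 0
    have e1 := congrFun hxy 1
    simp only [hg₁, hg₂, Pi.add_apply, Pi.smul_apply, smul_eq_mul,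
      Matrix.cons_val_zero, Matrix.cons_val_one, Matrix.head_cons] at e0 e1
    by_cases hK : q.1 + q.2 = 1
    · -- second coordinate gives contradiction
      have hm : q.1 ≠ 1 := by
        intro h1
        apply hq
        have : q.2 = 0 := by omega
        exact Prod.ext h1 this
      have ht : (2:ℤ) ≤ q.1 - q.2 - 1 ∨ q.1 - q.2 - 1 ≤ -2 := by omega
      have htr : (2:ℝ) ≤ (q.1:ℝ) - q.2 - 1 ∨ ((q.1:ℝ) - q.2 - 1) ≤ -2 := by
        rcases ht with ht | ht
        · left; exact_mod_cast ht
        · right; exact_mod_cast ht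
      have f1 : y 1 = x 1 / 2 + (Real.sqrt 3 / 4) * ((q.1:ℝ) - q.2) := by
        linear_combination -e1
      rcases htr with ht | ht
      · have hp : Real.sqrt 3 * 2 ≤ Real.sqrt 3 * ((q.1:ℝ) - q.2 - 1) :=
          mul_le_mul_of_nonneg_left ht s3nn
        linarith [hx1.1, hx1.2, hy1.1, hy1.2, lb, f1, hp]
      · have hp : Real.sqrt 3 * ((q.1:ℝ) - q.2 - 1) ≤ Real.sqrt 3 * (-2) :=
          mul_le_mul_of_nonneg_left ht s3nn
        linarith [hx1.1, hx1.2, hy1.1, hy1.2, lb, f1, hp]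
    · have hK' : (2:ℤ) ≤ q.1 + q.2 ∨ q.1 + q.2 ≤ 0 := by omega
      have hKr : (2:ℝ) ≤ (q.1:ℝ) + q.2 ∨ ((q.1:ℝ) + q.2) ≤ 0 := by
        rcases hK' with hK' | hK'
        · left; exact_mod_cast hK'
        · right; exact_mod_cast hK'
      have f0 : y 0 = x 0 / 2 + (3/4) * ((q.1:ℝ) + q.2) := by
        linear_combination -e0
      rcases hKr with hK' | hK' <;> linarith [hx0.1, hx0.2, hy0.1, hy0.2, f0]
  -- extract a good point from each ball
  have hN : volume {x | ¬ Set.indicator H (fun _ => (1:ℝ)) x =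
      ∑ p ∈ s, a p * Set.indicator (cell p) (fun _ => (1:ℝ)) x} = 0 := by
    have := h
    rw [Filter.EventuallyEq, ae_iff] at this
    exact this
  have hgood : ∀ w : Fin 2 → ℝ, ∃ y ∈ Metric.ball w (1/100),
      Set.indicator H (fun _ => (1:ℝ)) y =
        ∑ p ∈ s, a p * Set.indicator (cell p) (fun _ => (1:ℝ)) y := by
    intro w
    by_contra hc
    push_neg at hc
    have hsub : Metric.ball w (1/100) ⊆ {x | ¬ Set.indicator H (fun _ => (1:ℝ)) x =
        ∑ p ∈ s, a p * Set.indicator (cell p) (fun _ => (1:ℝ)) x} :=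
      fun y hy => hc y hy
    have hpos : volume (Metric.ball w (1/100)) ≠ 0 :=
      (Metric.measure_ball_pos volume w (by norm_num)).ne'
    exact hpos (measure_mono_null hsub hN)
  -- value of the sum on good points
  have hsumval : ∀ y, y ∈ cell (1, 0) → (∀ q : ℤ × ℤ, q ≠ (1, 0) → y ∉ cell q) →
      (∑ p ∈ s, a p * Set.indicator (cell p) (fun _ => (1:ℝ)) y) =
        (if (1, 0) ∈ s then a (1, 0) else 0) := by
    intro y hy hy'
    split_ifs with hmem
    · rw [Finset.sum_eq_single_of_mem (1, 0) hmem]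
      · rw [Set.indicator_of_mem hy]; ring
      · intro q hqs hqne
        rw [Set.indicator_of_notMem (hy' q hqne)]; ring
    · apply Finset.sum_eq_zero
      intro q hqs
      rw [Set.indicator_of_notMem (hy' q (by rintro rfl; exact hmem hqs))]; ring
  obtain ⟨y₁, hy₁b, hy₁e⟩ := hgood x₁
  obtain ⟨y₂, hy₂b, hy₂e⟩ := hgood x₂
  -- y₁ conclusions
  have hy₁H : y₁ ∈ H := hB1H y₁ hy₁b
  have hy₁c : y₁ ∈ cell (1, 0) := hcell10 y₁ (Or.inl hy₁b)
  have hy₁n : ∀ q : ℤ × ℤ, q ≠ (1, 0) → y₁ ∉ cell q := by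
    obtain ⟨d0, d1⟩ := hdist y₁ x₁ hy₁b
    rw [hx₁] at d0 d1
    simp only [Matrix.cons_val_zero, Matrix.cons_val_one, Matrix.head_cons] at d0 d1
    rw [abs_le] at d0 d1
    refine hnotcell y₁ ?_ ?_
    · rw [abs_le]; constructor <;> linarith [d0.1, d0.2]
    · rw [abs_le]; constructor <;> linarith [d1.1, d1.2, lb, ub]
  have hy₂H : y₂ ∉ H := hB2H y₂ hy₂b
  have hy₂c : y₂ ∈ cell (1, 0) := hcell10 y₂ (Or.inr hy₂b)
  have hy₂n : ∀ q : ℤ × ℤ, q ≠ (1, 0) → y₂ ∉ cell q := by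
    obtain ⟨d0, d1⟩ := hdist y₂ x₂ hy₂b
    rw [hx₂] at d0 d1
    simp only [Matrix.cons_val_zero, Matrix.cons_val_one, Matrix.head_cons] at d0 d1
    rw [abs_le] at d0 d1
    refine hnotcell y₂ ?_ ?_
    · rw [abs_le]; constructor <;> linarith [d0.1, d0.2]
    · rw [abs_le]; constructor <;> linarith [d1.1, d1.2]
  have e1 : (1:ℝ) = (if (1, 0) ∈ s then a (1, 0) else 0) := by
    rw [← hsumval y₁ hy₁c hy₁n, ← hy₁e, Set.indicator_of_mem hy₁H]
  have e2 : (0:ℝ) = (if (1, 0) ∈ s then a (1, 0) else 0) := by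
    rw [← hsumval y₂ hy₂c hy₂n, ← hy₂e, Set.indicator_of_notMem hy₂H]
  rw [← e2] at e1
  exact one_ne_zero e1
end

section
/- Let T be a polyhedral tessellation of ℝⁿ and T¹ a refinement candidate tessellation. If some cell c¹ of T¹ straddles a facet f of a cell c of T (i.e., there exist p ∈ f, a unit normal ν to f at p, and ε > 0 with p + εν ∈ interior(c¹) and p − εν ∈ interior(c¹)), then the indicator function of c is not Lebesgue-almost-everywhere equal to any finite linear combination of indicator functions of cells of T¹. -/
open MeasureTheory

/-- If a cell `T₁ k` of a refinement-candidate tessellation straddles a facet of a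
cell `T i` of a polyhedral tessellation `T` (there are `p`, a unit normal `ν` and
`ε > 0` with `p ± εν` in the interior of `T₁ k`, `p + εν` in the interior of `T i`
and `p − εν` in the interior of the adjacent cell `T j`), then the indicator
function of `T i` is not a.e. equal to any finite linear combination of indicator
functions of cells of `T₁`. -/
theorem stmt10 (n : ℕ) (ι ι' : Type)
    (T : ι → Set (EuclideanSpace ℝ (Fin n)))
    (T₁ : ι' → Set (EuclideanSpace ℝ (Fin n)))
    (hTclosed : ∀ i, IsClosed (T i)) (hTconv : ∀ i, Convex ℝ (T i))
    (hTbdd : ∀ i, Bornology.IsBounded (T i))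
    (hTint : ∀ i, (interior (T i)).Nonempty)
    (hTcover : ⋃ i, T i = Set.univ)
    (hTdisj : Pairwise fun i j => interior (T i) ∩ interior (T j) = ∅)
    (hT₁closed : ∀ k, IsClosed (T₁ k)) (hT₁conv : ∀ k, Convex ℝ (T₁ k))
    (hT₁bdd : ∀ k, Bornology.IsBounded (T₁ k))
    (hT₁int : ∀ k, (interior (T₁ k)).Nonempty)
    (hT₁cover : ⋃ k, T₁ k = Set.univ)
    (hT₁disj : Pairwise fun k l => interior (T₁ k) ∩ interior (T₁ l) = ∅)
    (i j : ι) (hij : i ≠ j) (k : ι')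
    (p ν : EuclideanSpace ℝ (Fin n)) (ε : ℝ) (hν : ‖ν‖ = 1) (hε : 0 < ε)
    (h₁ : p + ε • ν ∈ interior (T₁ k)) (h₂ : p - ε • ν ∈ interior (T₁ k))
    (h₃ : p + ε • ν ∈ interior (T i)) (h₄ : p - ε • ν ∈ interior (T j)) :
    ∀ (s : Finset ι') (a : ι' → ℝ),
      ¬ (Set.indicator (T i) (fun _ => (1 : ℝ)) =ᵐ[volume]
          fun x => ∑ m ∈ s, a m * Set.indicator (T₁ m) (fun _ => (1 : ℝ)) x) := by

  intro s a h
  classical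
  set f := Set.indicator (T i) (fun _ => (1 : ℝ)) with hf
  set g := fun x => ∑ m ∈ s, a m * Set.indicator (T₁ m) (fun _ => (1 : ℝ)) x with hg
  set N : Set (EuclideanSpace ℝ (Fin n)) :=
    {x | f x ≠ g x} ∪ frontier (T i) ∪ ⋃ m ∈ s, frontier (T₁ m) with hNdef
  have hN : volume N = 0 := by
    refine measure_union_null (measure_union_null ?_ ?_) ?_
    · exact h
    · exact Convex.addHaar_frontier volume (hTconv i)
    · exact (measure_biUnion_null_iff s.countable_toSet).2
        fun m _ => Convex.addHaar_frontier volume (hT₁conv m)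
  have key : ∀ A : Set (EuclideanSpace ℝ (Fin n)), IsOpen A → A.Nonempty →
      (A \ N).Nonempty := by
    intro A hA hAne
    by_contra hc
    rw [Set.not_nonempty_iff_eq_empty, Set.diff_eq_empty] at hc
    exact (hA.measure_pos volume hAne).ne' (le_antisymm (hN ▸ measure_mono hc) zero_le)
  obtain ⟨x, hx, hxN⟩ := key (interior (T₁ k) ∩ interior (T i))
    (isOpen_interior.inter isOpen_interior) ⟨_, h₁, h₃⟩
  obtain ⟨y, hy, hyN⟩ := key (interior (T₁ k) ∩ interior (T j))
    (isOpen_interior.inter isOpen_interior) ⟨_, h₂, h₄⟩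
  simp only [hNdef, Set.mem_union, Set.mem_setOf_eq, not_or, Set.mem_iUnion] at hxN hyN
  -- indicator values of T₁ m agree at x and y
  have hind : ∀ z : EuclideanSpace ℝ (Fin n), z ∈ interior (T₁ k) →
      (∀ m ∈ s, z ∉ frontier (T₁ m)) →
      ∀ m ∈ s, Set.indicator (T₁ m) (fun _ => (1 : ℝ)) z = if m = k then 1 else 0 := by
    intro z hzk hzfr m hm
    by_cases hmk : m = k
    · subst hmk
      simp [Set.indicator_of_mem (interior_subset hzk)]
    · rw [if_neg hmk]
      refine Set.indicator_of_notMem ?_ _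
      intro hzm
      have : z ∈ interior (T₁ m) := by
        have := (hT₁closed m).frontier_eq
        have hnot := hzfr m hm
        rw [this] at hnot
        simp only [Set.mem_diff, not_and, not_not] at hnot
        exact hnot hzm
      exact Set.eq_empty_iff_forall_notMem.1 (hT₁disj hmk) z ⟨this, hzk⟩
  have hgx : g x = g y := by
    simp only [hg]
    refine Finset.sum_congr rfl fun m hm => ?_
    rw [hind x hx.1 (fun m hm hfr => hxN.2 ⟨m, by simpa using ⟨hm, hfr⟩⟩) m hm,
        hind y hy.1 (fun m hm hfr => hyN.2 ⟨m, by simpa using ⟨hm, hfr⟩⟩) m hm]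
  have hfx : f x = 1 := Set.indicator_of_mem (interior_subset hx.2) _
  have hfy : f y = 0 := by
    refine Set.indicator_of_notMem ?_ _
    intro hyT
    have hyint : y ∈ interior (T i) := by
      have := (hTclosed i).frontier_eq
      have hnot := hyN.1.2
      rw [this] at hnot
      simp only [Set.mem_diff, not_and, not_not] at hnot
      exact hnot hyT
    exact Set.eq_empty_iff_forall_notMem.1 (hTdisj hij) y ⟨hyint, hy.2⟩
  have h1 : f x = g x := not_not.1 hxN.1.1
  have h2 : f y = g y := not_not.1 hyN.1.1
  rw [hfx, hgx, ← h2, hfy] at h1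
  exact one_ne_zero h1
end

section
/- In the hexagonal tessellation of ℝ² by unit regular hexagons, the line containing any edge of a hexagon is not contained in the union of the edges of the tessellation; consequently (by the facet-extension criterion) the space of indicator functions of the hexagonal tessellation is not refinable. -/
open Real

noncomputable def triVerts : Fin 3 → (Fin 2 → ℝ) :=
  ![![1, 0], ![-(1/2), Real.sqrt 3 / 2], ![-(1/2), -(Real.sqrt 3 / 2)]]

lemma triVerts_affineIndependent : AffineIndependent ℝ triVerts := by
  have hs : (0:ℝ) < Real.sqrt 3 := Real.sqrt_pos.2 (by norm_num)
  rw [affineIndependent_iff_of_fintype]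
  intro w hw hwv i
  rw [Finset.univ.weightedVSub_eq_linear_combination hw] at hwv
  rw [Fin.sum_univ_three] at hwv hw
  have h0 := congrFun hwv 0
  have h1 := congrFun hwv 1
  simp [triVerts] at h0 h1
  have hw12 : w 1 = w 2 := by
    rcases mul_eq_zero.1 (by nlinarith : Real.sqrt 3 * (w 1 - w 2) = 0) with h | h
    · linarith
    · linarith
  fin_cases i <;> simp <;> linarith

lemma triVerts_span : affineSpan ℝ (Set.range triVerts) = ⊤ := by
  rw [triVerts_affineIndependent.affineSpan_eq_top_iff_card_eq_finrank_add_one]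
  simp [Module.finrank_fin_fun]

noncomputable def triBasis : AffineBasis (Fin 3) ℝ (Fin 2 → ℝ) :=
  ⟨triVerts, triVerts_affineIndependent, triVerts_span⟩

lemma zero_mem_interior_tri : (0 : Fin 2 → ℝ) ∈ interior (convexHull ℝ (Set.range triVerts)) := by
  have h := triBasis.centroid_mem_interior_convexHull
  have hc : Finset.univ.centroid ℝ (triBasis : Fin 3 → (Fin 2 → ℝ)) = 0 := by
    rw [Finset.centroid_def, Finset.affineCombination_eq_linear_combination _ _ _ (by
      simp [Finset.centroidWeights_apply])]
    show ∑ i, Finset.univ.centroidWeights ℝ i • triVerts i = 0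
    rw [Fin.sum_univ_three]
    funext j
    fin_cases j <;> (simp [triVerts, Finset.centroidWeights_apply]; try ring)
  rw [hc] at h
  exact h

lemma convex_unitBox : Convex ℝ {y : Fin 2 → ℝ | |y 0| ≤ 1 ∧ |y 1| ≤ 1} := by
  intro y hy z hz a b ha hb hab
  obtain ⟨hy0, hy1⟩ := hy
  obtain ⟨hz0, hz1⟩ := hz
  constructor
  · have h := abs_add_le (a * y 0) (b * z 0)
    have he : (a • y + b • z) 0 = a * y 0 + b * z 0 := by simp
    rw [he]
    rw [abs_mul, abs_mul, abs_of_nonneg ha, abs_of_nonneg hb] at h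
    nlinarith [abs_nonneg (y 0), abs_nonneg (z 0)]
  · have h := abs_add_le (a * y 1) (b * z 1)
    have he : (a • y + b • z) 1 = a * y 1 + b * z 1 := by simp
    rw [he]
    rw [abs_mul, abs_mul, abs_of_nonneg ha, abs_of_nonneg hb] at h
    nlinarith [abs_nonneg (y 1), abs_nonneg (z 1)]

/-- In the hexagonal tessellation of `ℝ²` by unit regular hexagons (the Voronoi
tessellation of the lattice generated by `(3/2, √3/2)` and `(3/2, −√3/2)`), the line
through the top edge of the central hexagon is not contained in the union of the
edges (cell boundaries) of the tessellation; indeed, it contains a point in the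
interior of some hexagonal cell.  Hence the facet-extension criterion fails. -/
theorem stmt11
    (g₁ g₂ : Fin 2 → ℝ)
    (hg₁ : g₁ = ![3/2, Real.sqrt 3 / 2]) (hg₂ : g₂ = ![3/2, -(Real.sqrt 3 / 2)])
    (H : Set (Fin 2 → ℝ))
    (hH : H = convexHull ℝ
      {p | ∃ k : Fin 6, p = ![Real.cos ((k : ℕ) * π / 3), Real.sin ((k : ℕ) * π / 3)]})
    (cell : ℤ × ℤ → Set (Fin 2 → ℝ))
    (hcell : cell = fun p => (fun x => x + (p.1 : ℝ) • g₁ + (p.2 : ℝ) • g₂) '' H)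
    (line : Set (Fin 2 → ℝ))
    (hline : line = {x | x 1 = Real.sqrt 3 / 2}) :
    (¬ line ⊆ ⋃ p : ℤ × ℤ, frontier (cell p)) ∧
      ∃ x ∈ line, ∃ p : ℤ × ℤ, x ∈ interior (cell p) := by
  have hs1 : (1:ℝ) < Real.sqrt 3 := by
    nlinarith [Real.sq_sqrt (by norm_num : (3:ℝ) ≥ 0), Real.sqrt_nonneg 3]
  -- the triangle vertices are hexagon vertices
  have htri : Set.range triVerts ⊆
      {p : Fin 2 → ℝ | ∃ k : Fin 6,
        p = ![Real.cos ((k : ℕ) * π / 3), Real.sin ((k : ℕ) * π / 3)]} := by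
    rintro _ ⟨i, rfl⟩
    fin_cases i
    · refine ⟨0, ?_⟩
      funext j
      fin_cases j <;> (simp [triVerts])
    · refine ⟨2, ?_⟩
      have h2 : (2 : ℝ) * π / 3 = π - π/3 := by ring
      funext j
      fin_cases j <;>
        (simp [triVerts, h2, Real.cos_pi_sub, Real.sin_pi_sub,
          Real.cos_pi_div_three, Real.sin_pi_div_three]; try norm_num)
    · refine ⟨4, ?_⟩
      have hv4 : ((4 : Fin 6) : ℕ) = 4 := rfl
      have h4 : (((4 : Fin 6) : ℕ) : ℝ) * π / 3 = π + π/3 := by rw [hv4]; push_cast; ring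
      have h4' : (4 : ℝ) * π / 3 = π + π/3 := by ring
      funext j
      fin_cases j <;>
        (simp [triVerts, h4, h4', Real.cos_add, Real.sin_add, Real.cos_pi, Real.sin_pi,
          Real.cos_pi_div_three, Real.sin_pi_div_three, Matrix.vecHead, Matrix.vecTail];
          try norm_num)
  -- 0 is in the interior of H
  have h0H : (0 : Fin 2 → ℝ) ∈ interior H := by
    refine interior_mono ?_ zero_mem_interior_tri
    rw [hH]
    exact convexHull_mono htri
  -- H is inside the unit box
  have hball : ∀ y ∈ H, |y 0| ≤ 1 ∧ |y 1| ≤ 1 := by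
    intro y hy
    rw [hH] at hy
    refine convexHull_min ?_ convex_unitBox hy
    rintro _ ⟨k, rfl⟩
    exact ⟨by simpa using Real.abs_cos_le_one _, by simpa using Real.abs_sin_le_one _⟩
  have hxline : g₁ ∈ line := by
    rw [hline]
    show g₁ 1 = Real.sqrt 3 / 2
    rw [hg₁]; simp
  -- cell (1,0) is the translate of H by g₁
  have hc10 : cell (1, 0) = (fun y : Fin 2 → ℝ => y + g₁) '' H := by
    rw [hcell]
    simp
  -- g₁ is in the interior of cell (1,0)
  have hxint : g₁ ∈ interior (cell (1, 0)) := by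
    have himg := (Homeomorph.addRight g₁).image_interior H
    have hcoe : ⇑(Homeomorph.addRight g₁) = fun y : Fin 2 → ℝ => y + g₁ := rfl
    rw [hcoe] at himg
    rw [hc10, ← himg]
    exact ⟨0, h0H, by simp⟩
  -- x is not in any other cell
  have hnot : ∀ p : ℤ × ℤ, p ≠ (1, 0) → g₁ ∉ cell p := by
    rintro ⟨p1, p2⟩ hne hxcell
    rw [hcell] at hxcell
    obtain ⟨y, hyH, hyx⟩ := hxcell
    obtain ⟨hb0, hb1⟩ := hball y hyH
    have h0 : y 0 + (p1 : ℝ) * (3/2) + (p2 : ℝ) * (3/2) = 3/2 := by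
      have := congrFun hyx 0
      simp only [hg₁, hg₂, Pi.add_apply, Pi.smul_apply, smul_eq_mul,
        Matrix.cons_val_zero] at this
      convert this using 2
    have h1 : y 1 + (p1 : ℝ) * (Real.sqrt 3 / 2) - (p2 : ℝ) * (Real.sqrt 3 / 2)
        = Real.sqrt 3 / 2 := by
      have := congrFun hyx 1
      simp only [hg₁, hg₂, Pi.add_apply, Pi.smul_apply, smul_eq_mul,
        Matrix.cons_val_one, Matrix.head_cons, mul_neg, Matrix.cons_val_zero] at this
      linarith
    -- coordinate 0 forces p1 + p2 = 1
    have ha : ((1 - p1 - p2 : ℤ) : ℝ) = (2/3) * y 0 := by push_cast; linarith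
    have ha0 : (1 : ℤ) - p1 - p2 = 0 := by
      have habs : |((1 - p1 - p2 : ℤ) : ℝ)| < 1 := by
        rw [ha, abs_mul, abs_of_nonneg (by norm_num : (0:ℝ) ≤ 2/3)]
        nlinarith
      obtain ⟨hl, hr⟩ := abs_lt.1 habs
      have hl' : (-1 : ℤ) < 1 - p1 - p2 := by exact_mod_cast hl
      have hr' : (1 - p1 - p2 : ℤ) < 1 := by exact_mod_cast hr
      omega
    -- coordinate 1 forces p1 = 1
    have hb : y 1 = Real.sqrt 3 * ((1 - p1 : ℤ) : ℝ) := by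
      have hp2 : (p2 : ℝ) = 1 - (p1 : ℝ) := by exact_mod_cast (by omega : p2 = 1 - p1)
      rw [hp2] at h1
      push_cast
      linarith
    have hb0' : (1 : ℤ) - p1 = 0 := by
      have habs : |((1 - p1 : ℤ) : ℝ)| < 1 := by
        by_contra hcon
        push_neg at hcon
        have hle : Real.sqrt 3 * 1 ≤ Real.sqrt 3 * |((1 - p1 : ℤ) : ℝ)| :=
          mul_le_mul_of_nonneg_left hcon (by positivity)
        rw [hb, abs_mul, abs_of_nonneg (Real.sqrt_nonneg 3)] at hb1
        nlinarith
      obtain ⟨hl, hr⟩ := abs_lt.1 habs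
      have hl' : (-1 : ℤ) < 1 - p1 := by exact_mod_cast hl
      have hr' : (1 - p1 : ℤ) < 1 := by exact_mod_cast hr
      omega
    exact hne (by simp [Prod.ext_iff]; omega)
  -- cells are closed
  have hclosed : ∀ p : ℤ × ℤ, IsClosed (cell p) := by
    intro p
    have hVfin : ({p : Fin 2 → ℝ | ∃ k : Fin 6,
        p = ![Real.cos ((k : ℕ) * π / 3), Real.sin ((k : ℕ) * π / 3)]}).Finite := by
      have heq : {p : Fin 2 → ℝ | ∃ k : Fin 6,
          p = ![Real.cos ((k : ℕ) * π / 3), Real.sin ((k : ℕ) * π / 3)]}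
          = Set.range (fun k : Fin 6 =>
            ![Real.cos ((k : ℕ) * π / 3), Real.sin ((k : ℕ) * π / 3)]) :=
        Set.ext fun q => ⟨fun ⟨k, hk⟩ => ⟨k, hk.symm⟩, fun ⟨k, hk⟩ => ⟨k, hk.symm⟩⟩
      rw [heq]
      exact Set.finite_range _
    have hHcomp : IsCompact H := by
      rw [hH]
      exact hVfin.isCompact_convexHull (𝕜 := ℝ)
    have hcomp : IsCompact (cell p) := by
      rw [hcell]
      exact hHcomp.image ((continuous_id.add continuous_const).add continuous_const)
    exact hcomp.isClosed
  refine ⟨?_, g₁, hxline, (1, 0), hxint⟩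
  intro hsub
  have hmem := hsub hxline
  rw [Set.mem_iUnion] at hmem
  obtain ⟨p, hp⟩ := hmem
  by_cases hpeq : p = (1, 0)
  · subst hpeq
    rw [frontier, Set.mem_diff] at hp
    exact hp.2 hxint
  · exact hnot p hpeq ((hclosed p).closure_eq ▸ frontier_subset_closure hp)
end
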